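/- Let A ∈ ℝ^{m×n}, J ⊂ [n] with |J| = k, I_* ⊂ [m] with |I_*| = k+p, ε > 0. Let Π_J, Π_{I_*} be the corresponding selection matrices, set C = AΠ_J, U = Π_{I_*}^T A Π_J, and assume U has full column rank k. Let C = Q_C R_C be a thin QR factorization and assume Π_{I_*}^T Q_C has full column rank. Then ‖C U_ε^† Π_{I_*}^T‖₂ ≤ ‖(Π_{I_*}^T Q_C)^†‖₂, where U_ε^† is the ε-truncated pseudoinverse of U. -/

import Mathlib

open Matrix

noncomputable section

/-- `B` is the Moore–Penrose pseudoinverse of `A` (the four Penrose conditions). -/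
def IsMP {m n : ℕ} (A : Matrix (Fin m) (Fin n) ℝ) (B : Matrix (Fin n) (Fin m) ℝ) : Prop :=
  A * B * A = A ∧ B * A * B = B ∧ (A * B)ᵀ = A * B ∧ (B * A)ᵀ = B * A

/-- Euclidean norm of a vector. -/
def enorm₂ {a : ℕ} (v : Fin a → ℝ) : ℝ := Real.sqrt (∑ i, (v i) ^ 2)

/-- Spectral (ℓ2 operator) norm of a matrix. -/
def spec {a b : ℕ} (M : Matrix (Fin a) (Fin b) ℝ) : ℝ :=
  sSup {r | ∃ x : Fin b → ℝ, enorm₂ x = 1 ∧ r = enorm₂ (M.mulVec x)}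

/-- Selection matrix whose columns are the columns of the identity indexed by `g`. -/
def sel {a b : ℕ} (g : Fin a → Fin b) : Matrix (Fin b) (Fin a) ℝ :=
  fun i j => if g j = i then 1 else 0

-- auxiliary lemmas
lemma enorm_nonneg' {a : ℕ} (v : Fin a → ℝ) : 0 ≤ enorm₂ v := Real.sqrt_nonneg _

lemma enorm_eq_sqrt_dot {a : ℕ} (v : Fin a → ℝ) : enorm₂ v = Real.sqrt (v ⬝ᵥ v) := by
  simp [enorm₂, dotProduct, sq]

lemma dot_self_nonneg {a : ℕ} (v : Fin a → ℝ) : 0 ≤ v ⬝ᵥ v :=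
  Finset.sum_nonneg fun i _ => mul_self_nonneg _

lemma orth_dot {a b : ℕ} {M : Matrix (Fin a) (Fin b) ℝ} (hM : Mᵀ * M = 1)
    (x : Fin b → ℝ) : (M *ᵥ x) ⬝ᵥ (M *ᵥ x) = x ⬝ᵥ x := by
  rw [Matrix.dotProduct_mulVec, ← Matrix.mulVec_transpose, Matrix.mulVec_mulVec, hM,
    Matrix.one_mulVec]

lemma orth_enorm {a b : ℕ} {M : Matrix (Fin a) (Fin b) ℝ} (hM : Mᵀ * M = 1)
    (x : Fin b → ℝ) : enorm₂ (M *ᵥ x) = enorm₂ x := by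
  rw [enorm_eq_sqrt_dot, enorm_eq_sqrt_dot, orth_dot hM]

lemma proj_enorm_le {a b : ℕ} {M : Matrix (Fin a) (Fin b) ℝ} (hM : Mᵀ * M = 1)
    (y : Fin a → ℝ) : enorm₂ (Mᵀ *ᵥ y) ≤ enorm₂ y := by
  set u := M *ᵥ (Mᵀ *ᵥ y) with hu
  have h1 : u ⬝ᵥ y = (Mᵀ *ᵥ y) ⬝ᵥ (Mᵀ *ᵥ y) := by
    rw [hu, dotProduct_comm, Matrix.dotProduct_mulVec, ← Matrix.mulVec_transpose]
  have h2 : u ⬝ᵥ u = u ⬝ᵥ y := by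
    rw [hu, orth_dot hM, ← hu, h1]
  have h3 : 0 ≤ (y - u) ⬝ᵥ (y - u) := dot_self_nonneg _
  have hexp : (y - u) ⬝ᵥ (y - u) = y ⬝ᵥ y - 2 * (u ⬝ᵥ y) + u ⬝ᵥ u := by
    simp [sub_dotProduct, dotProduct_sub, dotProduct_comm u y]
    ring
  have hle : (Mᵀ *ᵥ y) ⬝ᵥ (Mᵀ *ᵥ y) ≤ y ⬝ᵥ y := by
    rw [← h1]; nlinarith [h2, h3, hexp]
  rw [enorm_eq_sqrt_dot, enorm_eq_sqrt_dot]
  exact Real.sqrt_le_sqrt hle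

lemma enorm₂_smul {a : ℕ} (c : ℝ) (v : Fin a → ℝ) : enorm₂ (c • v) = |c| * enorm₂ v := by
  simp only [enorm₂, Pi.smul_apply, smul_eq_mul, mul_pow, ← Finset.mul_sum]
  rw [Real.sqrt_mul (sq_nonneg c), Real.sqrt_sq_eq_abs]

lemma enorm_sq_eq {a : ℕ} (v : Fin a → ℝ) : enorm₂ v ^ 2 = ∑ i, v i ^ 2 :=
  Real.sq_sqrt (Finset.sum_nonneg fun i _ => sq_nonneg _)

lemma spec_bddAbove {a b : ℕ} (M : Matrix (Fin a) (Fin b) ℝ) :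
    BddAbove {r | ∃ x : Fin b → ℝ, enorm₂ x = 1 ∧ r = enorm₂ (M.mulVec x)} := by
  refine ⟨Real.sqrt (∑ i, ∑ j, M i j ^ 2), ?_⟩
  rintro r ⟨x, hx, rfl⟩
  have hx2 : ∑ j, x j ^ 2 = 1 := by
    have := enorm_sq_eq x; rw [hx] at this; simpa using this.symm
  have hmain : (enorm₂ (M *ᵥ x)) ^ 2 ≤ ∑ i, ∑ j, M i j ^ 2 := by
    rw [enorm_sq_eq]
    calc ∑ i, (M *ᵥ x) i ^ 2 = ∑ i, (∑ j, M i j * x j) ^ 2 := rfl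
      _ ≤ ∑ i, (∑ j, M i j ^ 2) * (∑ j, x j ^ 2) :=
          Finset.sum_le_sum fun i _ => Finset.sum_mul_sq_le_sq_mul_sq _ _ _
      _ = ∑ i, ∑ j, M i j ^ 2 := by simp [hx2]
  calc enorm₂ (M *ᵥ x) = Real.sqrt ((enorm₂ (M *ᵥ x)) ^ 2) :=
        (Real.sqrt_sq (enorm_nonneg' _)).symm
    _ ≤ Real.sqrt (∑ i, ∑ j, M i j ^ 2) := Real.sqrt_le_sqrt hmain

lemma spec_nonneg {a b : ℕ} (M : Matrix (Fin a) (Fin b) ℝ) : 0 ≤ spec M :=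
  Real.sSup_nonneg (by rintro r ⟨x, hx, rfl⟩; exact enorm_nonneg' _)

lemma enorm_mulVec_le_spec {a b : ℕ} (M : Matrix (Fin a) (Fin b) ℝ) (v : Fin b → ℝ) :
    enorm₂ (M *ᵥ v) ≤ spec M * enorm₂ v := by
  by_cases h : enorm₂ v = 0
  · have hv : v = 0 := by
      funext i
      have h2 := enorm_sq_eq v
      rw [h] at h2
      have := (Finset.sum_eq_zero_iff_of_nonneg (fun j _ => sq_nonneg (v j))).mp
        (by simpa using h2.symm) i (Finset.mem_univ i)
      exact pow_eq_zero_iff (two_ne_zero) |>.mp this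
    simp [hv, h, enorm₂]
  · have hvpos : 0 < enorm₂ v := lt_of_le_of_ne (enorm_nonneg' v) (Ne.symm h)
    set x := (enorm₂ v)⁻¹ • v with hxdef
    have hx1 : enorm₂ x = 1 := by
      rw [hxdef, enorm₂_smul, abs_of_pos (inv_pos.mpr hvpos), inv_mul_cancel₀ h]
    have hmem : enorm₂ (M *ᵥ x) ≤ spec M :=
      le_csSup (spec_bddAbove M) ⟨x, hx1, rfl⟩
    have hvx : (enorm₂ v) • x = v := by
      rw [hxdef, smul_smul, mul_inv_cancel₀ h, one_smul]
    have hMv : M *ᵥ v = (enorm₂ v) • (M *ᵥ x) :=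
      (congrArg (fun w => M *ᵥ w) hvx.symm).trans (Matrix.mulVec_smul M (enorm₂ v) x)
    calc enorm₂ (M *ᵥ v) = enorm₂ v * enorm₂ (M *ᵥ x) := by
          rw [hMv, enorm₂_smul, abs_of_pos hvpos]
      _ ≤ enorm₂ v * spec M := mul_le_mul_of_nonneg_left hmem (le_of_lt hvpos)
      _ = spec M * enorm₂ v := mul_comm _ _

lemma isUnit_of_rank_eq {k : ℕ} (M : Matrix (Fin k) (Fin k) ℝ) (h : M.rank = k) : IsUnit M := by
  rw [← Matrix.mulVec_surjective_iff_isUnit]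
  have hrange : LinearMap.range M.mulVecLin = ⊤ := by
    apply Submodule.eq_top_of_finrank_eq
    rw [show Module.finrank ℝ (LinearMap.range M.mulVecLin) = M.rank from rfl, h]
    simp [Module.finrank_fintype_fun_eq_card]
  intro y
  have hy : y ∈ LinearMap.range M.mulVecLin := by rw [hrange]; trivial
  obtain ⟨z, hz⟩ := hy
  exact ⟨z, hz⟩

lemma sel_transpose_mulVec {a b : ℕ} (f : Fin a → Fin b) (x : Fin b → ℝ) :
    (sel f)ᵀ *ᵥ x = fun j => x (f j) := by
  funext j
  simp [Matrix.mulVec, dotProduct, sel, Matrix.transpose_apply]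

lemma sel_enorm_le {a b : ℕ} {f : Fin a → Fin b} (hf : Function.Injective f) (x : Fin b → ℝ) :
    enorm₂ ((sel f)ᵀ *ᵥ x) ≤ enorm₂ x := by
  rw [sel_transpose_mulVec]
  apply Real.sqrt_le_sqrt
  calc ∑ j, x (f j) ^ 2 = ∑ i ∈ Finset.univ.image f, x i ^ 2 :=
        (Finset.sum_image (g := f) (f := fun i => x i ^ 2) (fun a _ b _ hab => hf hab)).symm
    _ ≤ ∑ i, x i ^ 2 :=
        Finset.sum_le_sum_of_subset_of_nonneg (Finset.subset_univ _)
          (fun i _ _ => sq_nonneg _)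

lemma diag01_enorm_le {a : ℕ} (d : Fin a → ℝ) (hd : ∀ i, d i = 0 ∨ d i = 1)
    (v : Fin a → ℝ) : enorm₂ (Matrix.diagonal d *ᵥ v) ≤ enorm₂ v := by
  apply Real.sqrt_le_sqrt
  apply Finset.sum_le_sum
  intro i _
  rw [Matrix.mulVec_diagonal]
  rcases hd i with h | h
  · simp [h]
    positivity
  · simp [h]

/-- `‖C U_ε† Π_{I_*}ᵀ‖₂ ≤ ‖(Π_{I_*}ᵀ Q_C)†‖₂` where `C = A Π_J`,
`U = Π_{I_*}ᵀ A Π_J` has full column rank, and `C = Q_C R_C` is a thin QR factorization. -/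
theorem stabilized_projector_norm_bound {m n k p : ℕ} (ε : ℝ) (hε : 0 < ε)
    (A : Matrix (Fin m) (Fin n) ℝ)
    (f : Fin (k + p) → Fin m) (hf : Function.Injective f)
    (g : Fin k → Fin n) (hg : Function.Injective g)
    (QC : Matrix (Fin m) (Fin k) ℝ) (RC : Matrix (Fin k) (Fin k) ℝ)
    (hQR : A * sel g = QC * RC) (hQC : QCᵀ * QC = 1)
    (W : Matrix (Fin (k + p)) (Fin k) ℝ) (V : Matrix (Fin k) (Fin k) ℝ) (σ : Fin k → ℝ)
    (hW : Wᵀ * W = 1) (hV : Vᵀ * V = 1) (hV' : V * Vᵀ = 1) (hσ : ∀ i, 0 ≤ σ i)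
    (hU : (sel f)ᵀ * A * sel g = W * Matrix.diagonal σ * Vᵀ)
    (hUrank : ((sel f)ᵀ * A * sel g).rank = k)
    (hQCrank : ((sel f)ᵀ * QC).rank = k)
    (H : Matrix (Fin k) (Fin (k + p)) ℝ) (hH : IsMP ((sel f)ᵀ * QC) H) :
    spec (A * sel g * (V * Matrix.diagonal (fun i => if ε ≤ σ i then (σ i)⁻¹ else 0) * Wᵀ) * (sel f)ᵀ)
      ≤ spec H := by
  obtain ⟨hP1, hP2, hP3, hP4⟩ := hH
  set B := (sel f)ᵀ * QC with hB
  -- Step 1: H * B = 1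
  have hHB : H * B = 1 := by
    have hidem : (H * B) * (H * B) = H * B := by
      calc (H * B) * (H * B) = (H * B * H) * B := by
            rw [Matrix.mul_assoc (H * B) H B]
        _ = H * B := by rw [hP2]
    have hrank : (H * B).rank = k := by
      apply le_antisymm (le_trans (Matrix.rank_le_card_width _) (by simp))
      calc k = B.rank := hQCrank.symm
        _ = (B * (H * B)).rank := by rw [← Matrix.mul_assoc, hP1]
        _ ≤ (H * B).rank := Matrix.rank_mul_le_right _ _
    obtain ⟨u, hu⟩ := isUnit_of_rank_eq _ hrank
    set N : Matrix (Fin k) (Fin k) ℝ := ↑u⁻¹ with hN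
    have hinv : (H * B) * N = 1 := by rw [← hu, hN]; exact u.mul_inv
    calc H * B = (H * B) * ((H * B) * N) := by rw [hinv, Matrix.mul_one]
      _ = ((H * B) * (H * B)) * N := by simp only [Matrix.mul_assoc]
      _ = (H * B) * N := by rw [hidem]
      _ = 1 := hinv
  -- Step 2: matrix identity
  set Dε := Matrix.diagonal (fun i => if ε ≤ σ i then (σ i)⁻¹ else 0) with hDε
  set d1 : Fin k → ℝ := fun i => if ε ≤ σ i then 1 else 0 with hd1
  have hSD : Matrix.diagonal σ * Dε = Matrix.diagonal d1 := by
    have hfg : (fun i => σ i * if ε ≤ σ i then (σ i)⁻¹ else 0) = d1 := by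
      funext i
      rw [hd1]
      by_cases h : ε ≤ σ i
      · simp only [if_pos h]
        exact mul_inv_cancel₀ (ne_of_gt (lt_of_lt_of_le hε h))
      · simp only [if_neg h, mul_zero]
    rw [hDε, Matrix.diagonal_mul_diagonal]
    exact congrArg Matrix.diagonal hfg
  have hRC : RC = H * (W * (Matrix.diagonal σ * Vᵀ)) := by
    have h1 : B * RC = W * (Matrix.diagonal σ * Vᵀ) := by
      rw [hB, Matrix.mul_assoc, ← hQR, ← Matrix.mul_assoc]
      rw [hU, Matrix.mul_assoc]
    calc RC = (H * B) * RC := by rw [hHB, Matrix.one_mul]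
      _ = H * (B * RC) := by rw [Matrix.mul_assoc]
      _ = H * (W * (Matrix.diagonal σ * Vᵀ)) := by rw [h1]
  have key : A * sel g * (V * Dε * Wᵀ) * (sel f)ᵀ
      = QC * (H * (W * (Matrix.diagonal d1 * (Wᵀ * (sel f)ᵀ)))) := by
    rw [hQR, hRC]
    have hVV : ∀ (X : Matrix (Fin k) (Fin m) ℝ), Vᵀ * (V * X) = X := fun X => by
      rw [← Matrix.mul_assoc, hV, Matrix.one_mul]
    simp only [Matrix.mul_assoc]
    rw [hVV, ← Matrix.mul_assoc (Matrix.diagonal σ) Dε, hSD]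
  rw [key]
  -- Step 3: norm bound
  refine Real.sSup_le ?_ (spec_nonneg H)
  rintro r ⟨x, hx, rfl⟩
  simp only [← Matrix.mulVec_mulVec]
  set y0 := (sel f)ᵀ *ᵥ x
  set y1 := Wᵀ *ᵥ y0
  set y2 := Matrix.diagonal d1 *ᵥ y1
  set y3 := W *ᵥ y2
  have hy3 : enorm₂ y3 ≤ 1 := by
    calc enorm₂ y3 = enorm₂ y2 := orth_enorm hW y2
      _ ≤ enorm₂ y1 := diag01_enorm_le d1 (fun i => by by_cases h : ε ≤ σ i <;> simp [hd1, h]) y1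
      _ ≤ enorm₂ y0 := proj_enorm_le hW y0
      _ ≤ enorm₂ x := sel_enorm_le hf x
      _ = 1 := hx
  calc enorm₂ (QC *ᵥ (H *ᵥ y3)) = enorm₂ (H *ᵥ y3) := orth_enorm hQC _
    _ ≤ spec H * enorm₂ y3 := enorm_mulVec_le_spec H y3
    _ ≤ spec H * 1 := mul_le_mul_of_nonneg_left hy3 (spec_nonneg H)
    _ = spec H := mul_one _
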